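/- Let K and K' be nonempty compact convex sets. Suppose there exists a bijection α : ∂_e K → ∂_e K' such that: for every f ∈ A_c(K) there exists F ∈ A_c(K') with F(ψ') = f(α^{-1}(ψ')) for all ψ' ∈ ∂_e K', and for every g ∈ A_c(K') there exists G ∈ A_c(K) with G(ψ) = g(α(ψ)) for all ψ ∈ ∂_e K. Then there exists a gauge-preserving bijection Φ : A_c(K) → A_c(K') with Φ(1_K) = 1_{K'} satisfying Φ(f)(ψ') = f(α^{-1}(ψ')) for every f ∈ A_c(K) and every ψ' ∈ ∂_e K'. -/

import Mathlib

open Set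

noncomputable section

/-- `f : K → ℝ` is affine on `K`. -/
def IsAffineOn {E : Type*} [AddCommGroup E] [Module ℝ E] (K : Set E) (f : K → ℝ) : Prop :=
  ∀ (x y : K) (t : ℝ), 0 ≤ t → t ≤ 1 →
    ∀ h : t • (x : E) + (1 - t) • (y : E) ∈ K,
      f ⟨t • (x : E) + (1 - t) • (y : E), h⟩ = t * f x + (1 - t) * f y

lemma le_of_extreme
    {E : Type*} [AddCommGroup E] [Module ℝ E] [TopologicalSpace E] [IsTopologicalAddGroup E]
    [ContinuousSMul ℝ E] [T2Space E] [LocallyConvexSpace ℝ E]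
    {K : Set E} (hKcp : IsCompact K) (hKcv : Convex ℝ K)
    {f g : K → ℝ} (hf : Continuous f) (haf : IsAffineOn K f)
    (hg : Continuous g) (hag : IsAffineOn K g)
    (h : ∀ ψ : K.extremePoints ℝ,
      g ⟨(ψ : E), extremePoints_subset ψ.2⟩ ≤ f ⟨(ψ : E), extremePoints_subset ψ.2⟩) :
    ∀ x : K, g x ≤ f x := by
  haveI : CompactSpace K := isCompact_iff_compactSpace.mp hKcp
  set S : Set E := Subtype.val '' {p : K | g p ≤ f p} with hS
  have hSclosed : IsClosed S := by
    have : IsCompact S := ((isClosed_le hg hf).isCompact).image continuous_subtype_val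
    exact this.isClosed
  have hSconv : Convex ℝ S := by
    rintro x ⟨p, hp, rfl⟩ y ⟨q, hq, rfl⟩ a b ha hb hab
    have hb' : b = 1 - a := by linarith
    subst hb'
    have hpq : a • (p : E) + (1 - a) • (q : E) ∈ K := by
      have := hKcv p.2 q.2 ha hb hab
      simpa using this
    refine ⟨⟨_, hpq⟩, ?_, rfl⟩
    have hfe := haf p q a ha (by linarith) hpq
    have hge := hag p q a ha (by linarith) hpq
    simp only [mem_setOf_eq] at hp hq ⊢
    rw [hfe, hge]
    have h1 : a * g p ≤ a * f p := mul_le_mul_of_nonneg_left hp ha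
    have h2 : (1 - a) * g q ≤ (1 - a) * f q := mul_le_mul_of_nonneg_left hq (by linarith)
    linarith
  have hextS : K.extremePoints ℝ ⊆ S := by
    rintro ψ hψ
    exact ⟨⟨ψ, extremePoints_subset hψ⟩, h ⟨ψ, hψ⟩, rfl⟩
  have hKS : K ⊆ S := by
    rw [← closure_convexHull_extremePoints hKcp hKcv]
    calc closure (convexHull ℝ (K.extremePoints ℝ)) ⊆ closure S :=
          closure_mono (convexHull_min hextS hSconv)
      _ = S := hSclosed.closure_eq
  intro x
  obtain ⟨p, hp, hpx⟩ := hKS x.2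
  have : p = x := Subtype.ext hpx
  exact this ▸ hp

lemma eq_of_extreme
    {E : Type*} [AddCommGroup E] [Module ℝ E] [TopologicalSpace E] [IsTopologicalAddGroup E]
    [ContinuousSMul ℝ E] [T2Space E] [LocallyConvexSpace ℝ E]
    {K : Set E} (hKcp : IsCompact K) (hKcv : Convex ℝ K)
    {f g : K → ℝ} (hf : Continuous f) (haf : IsAffineOn K f)
    (hg : Continuous g) (hag : IsAffineOn K g)
    (h : ∀ ψ : K.extremePoints ℝ,
      g ⟨(ψ : E), extremePoints_subset ψ.2⟩ = f ⟨(ψ : E), extremePoints_subset ψ.2⟩) :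
    f = g := by
  funext x
  exact le_antisymm (le_of_extreme hKcp hKcv hg hag hf haf (fun ψ => (h ψ).ge) x)
    (le_of_extreme hKcp hKcv hf haf hg hag (fun ψ => (h ψ).le) x)

lemma affine_mul {E : Type*} [AddCommGroup E] [Module ℝ E] {K : Set E} {g : K → ℝ}
    (hag : IsAffineOn K g) (c : ℝ) : IsAffineOn K (fun x => c * g x) := by
  intro x y t ht ht1 h
  simp only [hag x y t ht ht1 h]
  ring

/-- Membership in `A_c(K)`: continuous, affine and strictly positive functions on `K`. -/
def MemAc {E : Type*} [AddCommGroup E] [Module ℝ E] [TopologicalSpace E]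
    (K : Set E) (f : K → ℝ) : Prop :=
  Continuous f ∧ IsAffineOn K f ∧ ∀ x : K, 0 < f x

/-- The gauge `m(f,g) = sup {λ > 0 : λ·g ≤ f}`. -/
def gaugem {E : Type*} [AddCommGroup E] [Module ℝ E] {K : Set E} (f g : K → ℝ) : ℝ :=
  sSup {l : ℝ | 0 < l ∧ ∀ x : K, l * g x ≤ f x}

theorem statement3
    {E E' : Type*}
    [AddCommGroup E] [Module ℝ E] [TopologicalSpace E] [IsTopologicalAddGroup E]
    [ContinuousSMul ℝ E] [T2Space E] [LocallyConvexSpace ℝ E]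
    [AddCommGroup E'] [Module ℝ E'] [TopologicalSpace E'] [IsTopologicalAddGroup E']
    [ContinuousSMul ℝ E'] [T2Space E'] [LocallyConvexSpace ℝ E']
    (K : Set E) (K' : Set E')
    (hKne : K.Nonempty) (hKcp : IsCompact K) (hKcv : Convex ℝ K)
    (hK'ne : K'.Nonempty) (hK'cp : IsCompact K') (hK'cv : Convex ℝ K')
    (α : (K.extremePoints ℝ) ≃ (K'.extremePoints ℝ))
    (hext : ∀ f : {f : K → ℝ // MemAc K f}, ∃ F : {F : K' → ℝ // MemAc K' F},
      ∀ ψ' : K'.extremePoints ℝ,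
        F.1 ⟨(ψ' : E'), extremePoints_subset ψ'.2⟩
          = f.1 ⟨(α.symm ψ' : E), extremePoints_subset (α.symm ψ').2⟩)
    (hext' : ∀ g : {g : K' → ℝ // MemAc K' g}, ∃ G : {G : K → ℝ // MemAc K G},
      ∀ ψ : K.extremePoints ℝ,
        G.1 ⟨(ψ : E), extremePoints_subset ψ.2⟩
          = g.1 ⟨(α ψ : E'), extremePoints_subset (α ψ).2⟩) :
    ∃ Φ : {f : K → ℝ // MemAc K f} → {g : K' → ℝ // MemAc K' g},
      Function.Bijective Φ ∧
      (∀ f g : {f : K → ℝ // MemAc K f},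
        gaugem (Φ f).1 (Φ g).1 = gaugem f.1 g.1) ∧
      (∀ (h1 : MemAc K (fun _ => (1 : ℝ))) (h1' : MemAc K' (fun _ => (1 : ℝ))),
        Φ ⟨fun _ => 1, h1⟩ = ⟨fun _ => 1, h1'⟩) ∧
      (∀ (f : {f : K → ℝ // MemAc K f}) (ψ' : K'.extremePoints ℝ),
        (Φ f).1 ⟨(ψ' : E'), extremePoints_subset ψ'.2⟩
          = f.1 ⟨(α.symm ψ' : E), extremePoints_subset (α.symm ψ').2⟩) := by
  classical
  choose Φ hΦ using hext
  choose Ψ hΨ using hext'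
  have hleft : Function.LeftInverse Ψ Φ := by
    intro f
    apply Subtype.ext
    refine eq_of_extreme hKcp hKcv (Ψ (Φ f)).2.1 (Ψ (Φ f)).2.2.1 f.2.1 f.2.2.1 ?_
    intro ψ
    rw [hΨ (Φ f) ψ, hΦ f (α ψ)]
    simp
  have hright : Function.RightInverse Ψ Φ := by
    intro g
    apply Subtype.ext
    refine eq_of_extreme hK'cp hK'cv (Φ (Ψ g)).2.1 (Φ (Ψ g)).2.2.1 g.2.1 g.2.2.1 ?_
    intro ψ'
    rw [hΦ (Ψ g) ψ', hΨ g (α.symm ψ')]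
    simp
  refine ⟨Φ, Function.bijective_iff_has_inverse.mpr ⟨Ψ, hleft, hright⟩, ?_, ?_, hΦ⟩
  · intro f g
    unfold gaugem
    congr 1
    ext l
    simp only [mem_setOf_eq]
    constructor
    · rintro ⟨hl, hx⟩
      refine ⟨hl, ?_⟩
      refine le_of_extreme hKcp hKcv f.2.1 f.2.2.1
        (continuous_const.mul g.2.1) (affine_mul g.2.2.1 l) ?_
      intro ψ
      have h1 := hx ⟨(α ψ : E'), extremePoints_subset (α ψ).2⟩
      rw [hΦ f (α ψ), hΦ g (α ψ)] at h1
      simpa using h1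
    · rintro ⟨hl, hx⟩
      refine ⟨hl, ?_⟩
      refine le_of_extreme hK'cp hK'cv (Φ f).2.1 (Φ f).2.2.1
        (continuous_const.mul (Φ g).2.1) (affine_mul (Φ g).2.2.1 l) ?_
      intro ψ'
      rw [hΦ f ψ', hΦ g ψ']
      exact hx _
  · intro h1 h1'
    apply Subtype.ext
    refine eq_of_extreme hK'cp hK'cv (Φ ⟨_, h1⟩).2.1 (Φ ⟨_, h1⟩).2.2.1 h1'.1 h1'.2.1 ?_
    intro ψ'
    rw [hΦ ⟨_, h1⟩ ψ']
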